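/- Let h ≥ 2 and let 𝒫(h) be the (finite) set of primes p such that p − 1 divides h. Let c_1, ..., c_h be nonzero integers such that gcd(c_i, p) = 1 for all i ∈ {1, ..., h} and all p ∈ 𝒫(h). Then there exist positive integers u and Q with gcd(u, Q) = 1 such that every prime q with q ≡ u (mod Q) satisfies gcd(q^h − 1, c_i) = 1 for all i ∈ {1, ..., h}. -/

import Mathlib

/-- Auxiliary: a gcd is 1 if no prime divides both arguments. -/
lemma aux_gcd_eq_one (a b : ℤ) (hb : b ≠ 0)
    (H : ∀ r : ℕ, r.Prime → (r : ℤ) ∣ a → (r : ℤ) ∣ b → False) : Int.gcd a b = 1 := by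
  by_contra hne
  obtain ⟨r, hr, hrd⟩ := Nat.exists_prime_and_dvd hne
  exact H r hr ((Int.natCast_dvd_natCast.mpr hrd).trans (Int.gcd_dvd_left _ _))
    ((Int.natCast_dvd_natCast.mpr hrd).trans (Int.gcd_dvd_right _ _))

/-- Auxiliary: every prime has a primitive root, as a natural number. -/
lemma aux_exists_primitive_root (p : ℕ) (hp : p.Prime) :
    ∃ v : ℕ, Nat.Coprime v p ∧ orderOf (v : ZMod p) = p - 1 := by
  haveI : Fact p.Prime := ⟨hp⟩
  obtain ⟨g, hg⟩ := IsCyclic.exists_generator (α := (ZMod p)ˣ)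
  refine ⟨((g : ZMod p)).val, ZMod.val_coe_unit_coprime g, ?_⟩
  have h1 : (((g : ZMod p)).val : ZMod p) = (g : ZMod p) := ZMod.natCast_rightInverse _
  rw [h1, orderOf_units, orderOf_eq_card_of_forall_mem_zpowers hg, Nat.card_eq_fintype_card, ZMod.card_units]

theorem stmt_13 (h : ℕ) (hh : 2 ≤ h) (c : Fin h → ℤ) (hc : ∀ i, c i ≠ 0)
    (hcp : ∀ i, ∀ p : ℕ, p.Prime → (p - 1) ∣ h → Int.gcd (c i) p = 1) :
    ∃ u Q : ℕ, 0 < u ∧ 0 < Q ∧ Nat.gcd u Q = 1 ∧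
      ∀ q : ℕ, q.Prime → q ≡ u [MOD Q] →
        ∀ i, Int.gcd ((q : ℤ) ^ h - 1) (c i) = 1 := by
  classical
  set N : ℤ := ∏ i, c i with hN
  have hN0 : N ≠ 0 := Finset.prod_ne_zero_iff.mpr fun i _ => hc i
  set S : Finset ℕ := N.natAbs.primeFactors with hS
  -- membership: a prime dividing some c i is in S
  have hmemS : ∀ r : ℕ, r.Prime → ∀ i, (r : ℤ) ∣ c i → r ∈ S := by
    intro r hr i hri
    have : (r : ℤ) ∣ N := hri.trans (Finset.dvd_prod_of_mem c (Finset.mem_univ i))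
    exact Nat.mem_primeFactors.mpr ⟨hr, by simpa using Int.natAbs_dvd_natAbs.mpr this, Int.natAbs_ne_zero.mpr hN0⟩
  -- key consequence: p ∈ S → ¬ (p - 1 ∣ h)
  have hSnd : ∀ p ∈ S, p.Prime ∧ ¬ (p - 1) ∣ h := by
    intro p hp
    have hpp : p.Prime := Nat.prime_of_mem_primeFactors hp
    refine ⟨hpp, fun hdvd => ?_⟩
    have hpN : (p : ℤ) ∣ N := by
      have h2 := Nat.dvd_of_mem_primeFactors (show p ∈ N.natAbs.primeFactors from hp)
      exact Int.natAbs_dvd_natAbs.mp (by simpa using h2)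
    obtain ⟨i, _, hpi⟩ := Prime.exists_mem_finset_dvd (Nat.prime_iff_prime_int.mp hpp) (hN ▸ hpN)
    have h1 := hcp i p hpp hdvd
    have : (p : ℤ) ∣ (Int.gcd (c i) p : ℤ) := Int.dvd_coe_gcd hpi dvd_rfl
    rw [h1] at this
    exact hpp.one_lt.ne' (by exact_mod_cast Int.eq_one_of_dvd_one (by positivity) this)
  -- choose primitive roots
  have hchoice : ∀ p ∈ S, ∃ v : ℕ, Nat.Coprime v p ∧ orderOf (v : ZMod p) = p - 1 :=
    fun p hp => aux_exists_primitive_root p (hSnd p hp).1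
  choose! v hv using hchoice
  -- CRT
  have hSne : ∀ p ∈ S, p ≠ 0 := fun p hp => (hSnd p hp).1.pos.ne'
  have hpair : Set.Pairwise (S : Set ℕ) (Function.onFun Nat.Coprime id) := by
    intro p hp q hq hne
    exact (Nat.coprime_primes (hSnd p hp).1 (hSnd q hq).1).mpr hne
  obtain ⟨u, hu⟩ := Nat.chineseRemainderOfFinset v id S hSne hpair
  set Q : ℕ := ∏ p ∈ S, p with hQ
  -- u is coprime to each p in S, hence to Q
  have hucp : ∀ p ∈ S, Nat.Coprime u p := by
    intro p hp
    haveI : NeZero p := ⟨hSne p hp⟩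
    have h1 : (u : ZMod p) = (v p : ZMod p) := (ZMod.natCast_eq_natCast_iff _ _ _).mpr (hu p hp)
    have h2 : IsUnit ((u : ZMod p)) := by
      rw [h1]; exact (ZMod.isUnit_iff_coprime _ _).mpr (hv p hp).1
    exact (ZMod.isUnit_iff_coprime _ _).mp h2
  have huQ : Nat.Coprime u Q := Nat.Coprime.prod_right fun p hp => hucp p hp
  -- main property
  have main : ∀ q : ℕ, q.Prime → q ≡ u [MOD Q] →
      ∀ i, Int.gcd ((q : ℤ) ^ h - 1) (c i) = 1 := by
    intro q hq hquQ i
    refine aux_gcd_eq_one _ _ (hc i) fun r hr hr1 hr2 => ?_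
    have hrS : r ∈ S := hmemS r hr i hr2
    have hrp : r.Prime := (hSnd r hrS).1
    haveI : NeZero r := ⟨hrp.pos.ne'⟩
    -- q ≡ u ≡ v r mod r
    have hqv : (q : ZMod r) = (v r : ZMod r) := by
      have hdvd : r ∣ Q := Finset.dvd_prod_of_mem id hrS
      have := (hquQ.of_dvd hdvd).trans (hu r hrS)
      exact (ZMod.natCast_eq_natCast_iff _ _ _).mpr this
    -- (q : ZMod r)^h = 1
    have hpow : (q : ZMod r) ^ h = 1 := by
      have : (((q : ℤ) ^ h - 1 : ℤ) : ZMod r) = 0 :=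
        (ZMod.intCast_zmod_eq_zero_iff_dvd _ _).mpr hr1
      push_cast at this
      linear_combination this
    have hord : orderOf ((q : ZMod r)) ∣ h := orderOf_dvd_of_pow_eq_one hpow
    rw [hqv, (hv r hrS).2] at hord
    exact (hSnd r hrS).2 hord
  by_cases hSe : S = ∅
  · refine ⟨1, 1, one_pos, one_pos, Nat.gcd_self 1, ?_⟩
    intro q hq _ i
    refine aux_gcd_eq_one _ _ (hc i) fun r hr hr1 hr2 => ?_
    have := hmemS r hr i hr2
    simp [hSe] at this
  · -- S nonempty, so Q ≥ 2 and u > 0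
    obtain ⟨p, hp⟩ := Finset.nonempty_iff_ne_empty.mpr hSe
    have hQ2 : 2 ≤ Q := (hSnd p hp).1.two_le.trans (Finset.single_le_prod' (f := id)
      (fun q hq => (hSnd q hq).1.one_lt.le) hp)
    have hu0 : 0 < u := by
      rcases Nat.eq_zero_or_pos u with h' | h'
      · exfalso
        have := hucp p hp
        rw [h'] at this
        exact (hSnd p hp).1.one_lt.ne' (Nat.coprime_zero_left p |>.mp this)
      · exact h'
    exact ⟨u, Q, hu0, by omega, huQ, main⟩
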